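/- Any trajectory in the corner MDP M' from a corner c to the goal g corresponds to a trajectory in the maze MDP M with the same total cost; consequently V*_M(c) ≤ V*_{M'}(c) for every corner c. -/

import Mathlib

open scoped BigOperators

namespace Maze

/-- Points of the `d`-dimensional integer maze. -/
abbrev Pt (d : ℕ) := Fin d → ℤ

/-- An open axis-aligned hyperrectangular obstacle determined by `a, b`. -/
def Obst {d : ℕ} (a b : Pt d) : Set (Pt d) := {x | ∀ i, a i < x i ∧ x i < b i}

/-- The union of the `k` obstacles. -/
def OSet {d k : ℕ} (a b : Fin k → Pt d) : Set (Pt d) := ⋃ j, Obst (a j) (b j)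

/-- The list of `i`-th coordinates of obstacle boundaries together with the goal coordinate. -/
def Lists {d k : ℕ} (a b : Fin k → Pt d) (g : Pt d) (i : Fin d) : Finset ℤ :=
  (Finset.univ.image fun j => a j i) ∪ (Finset.univ.image fun j => b j i) ∪ {g i}

/-- The surface (closed grid cell) of a point `x` with respect to coordinate lists `L`:
`y` lies in the surface iff in every coordinate `i`, `y i` equals `x i` when `x i` is a
grid value, and otherwise `y i` lies between the grid values surrounding `x i`. -/
def Surf {d : ℕ} (L : Fin d → Finset ℤ) (x : Pt d) : Set (Pt d) :=
  {y | ∀ i, (x i ∈ L i → y i = x i) ∧ (∀ l ∈ L i, l < x i → l ≤ y i) ∧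
      (∀ l ∈ L i, x i < l → y i ≤ l)}

/-- Corners: points all of whose coordinates are grid values. -/
def Corners {d : ℕ} (L : Fin d → Finset ℤ) : Set (Pt d) := {c | ∀ i, c i ∈ L i}

/-- Manhattan distance. -/
def manh {d : ℕ} (s t : Pt d) : ℕ := ∑ i, (s i - t i).natAbs

/-- A unit move in a single coordinate. -/
def Step {d : ℕ} (x y : Pt d) : Prop :=
  ∃ i, (y i = x i + 1 ∨ y i = x i - 1) ∧ ∀ j, j ≠ i → y j = x j

/-- A maze path of length `n` from `s` to `t` avoiding the obstacle set `O`. -/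
def IsMazePath {d : ℕ} (O : Set (Pt d)) (f : ℕ → Pt d) (n : ℕ) (s t : Pt d) : Prop :=
  f 0 = s ∧ f n = t ∧ (∀ m, m < n → Step (f m) (f (m + 1))) ∧ (∀ m, m ≤ n → f m ∉ O)

/-- Minimal number of steps of an obstacle-avoiding maze path from `s` to `t`
(`⊤` if there is none). -/
noncomputable def mazeDist {d : ℕ} (O : Set (Pt d)) (s t : Pt d) : ℕ∞ :=
  sInf {N : ℕ∞ | ∃ n : ℕ, N = n ∧ ∃ f, IsMazePath O f n s t}

/-- Two corners are adjacent if they agree in all coordinates except one, where their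
values are consecutive elements of the corresponding list, and the axis-aligned segment
between them avoids the obstacles. -/
def Adjacent {d : ℕ} (L : Fin d → Finset ℤ) (O : Set (Pt d)) (c c' : Pt d) : Prop :=
  c ∈ Corners L ∧ c' ∈ Corners L ∧
  ∃ i, c i ≠ c' i ∧ (∀ j, j ≠ i → c j = c' j) ∧
    (∀ l ∈ L i, ¬(min (c i) (c' i) < l ∧ l < max (c i) (c' i))) ∧
    (∀ z : Pt d, (∀ j, j ≠ i → z j = c j) →
      min (c i) (c' i) ≤ z i → z i ≤ max (c i) (c' i) → z ∉ O)

/-- Shortest-path distance from `s` to `t` in the weighted corner graph, with edges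
between adjacent corners weighted by their Manhattan distance. -/
noncomputable def cornerDist {d : ℕ} (L : Fin d → Finset ℤ) (O : Set (Pt d))
    (s t : Pt d) : ℕ∞ :=
  sInf {N : ℕ∞ | ∃ (n : ℕ) (c : ℕ → Pt d), c 0 = s ∧ c n = t ∧
    (∀ m, m < n → Adjacent L O (c m) (c (m + 1))) ∧
    N = ∑ m ∈ Finset.range n, (manh (c m) (c (m + 1)) : ℕ∞)}

lemma adjacent_mazePath {d : ℕ} {L : Fin d → Finset ℤ} {O : Set (Pt d)} {c c' : Pt d}
    (h : Adjacent L O c c') : ∃ f, IsMazePath O f (manh c c') c c' := by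
  obtain ⟨hc, hc', i, hne, heq, -, havoid⟩ := h
  have hmanh : manh c c' = (c i - c' i).natAbs := by
    unfold manh
    rw [Finset.sum_eq_single i]
    · intro j _ hj
      rw [heq j hj]; simp
    · simp
  set s : ℤ := if c i < c' i then 1 else -1 with hs
  have hkey : ∀ m : ℕ, m ≤ manh c c' → min (c i) (c' i) ≤ c i + s * m ∧ c i + s * m ≤ max (c i) (c' i) := by
    intro m hm
    rw [hmanh] at hm
    rcases lt_or_ge (c i) (c' i) with hlt | hge
    · simp only [hs, if_pos hlt]
      constructor <;> [skip; skip] <;> omega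
    · have : ¬ c i < c' i := not_lt.mpr hge
      simp only [hs, if_neg this]
      constructor <;> omega
  refine ⟨fun m j => if j = i then c i + s * m else c j, ?_, ?_, ?_, ?_⟩
  · funext j; by_cases hj : j = i <;> simp [hj]
  · funext j
    by_cases hj : j = i
    · subst hj
      simp only [if_pos rfl]
      rw [hmanh]
      rcases lt_or_ge (c j) (c' j) with hlt | hge
      · simp only [hs, if_pos hlt, if_true]; omega
      · have hne' : c j ≠ c' j := hne
        have : ¬ c j < c' j := not_lt.mpr hge
        simp only [hs, if_neg this, if_true]; omega
    · simp [hj, heq j hj]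
  · intro m hm
    refine ⟨i, ?_, ?_⟩
    · simp only [if_pos rfl]
      rcases lt_or_ge (c i) (c' i) with hlt | hge
      · left; simp only [hs, if_pos hlt]; push_cast; ring
      · right
        have : ¬ c i < c' i := not_lt.mpr hge
        simp only [hs, if_neg this]; push_cast; ring
    · intro j hj; simp [hj]
  · intro m hm
    apply havoid
    · intro j hj; simp [hj]
    · simp only [if_pos rfl]; exact (hkey m hm).1
    · simp only [if_pos rfl]; exact (hkey m hm).2

lemma mazePath_append {d : ℕ} {O : Set (Pt d)} {f g : ℕ → Pt d} {n p : ℕ} {s t u : Pt d}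
    (hf : IsMazePath O f n s t) (hg : IsMazePath O g p t u) :
    ∃ h, IsMazePath O h (n + p) s u := by
  obtain ⟨hf0, hfn, hfs, hfO⟩ := hf
  obtain ⟨hg0, hgp, hgs, hgO⟩ := hg
  refine ⟨fun m => if m < n then f m else g (m - n), ?_, ?_, ?_, ?_⟩
  · by_cases h0 : 0 < n
    · simp [h0, hf0]
    · have : n = 0 := by omega
      subst this
      simpa [hg0, ← hfn] using hf0
  · have : ¬ n + p < n := by omega
    simp [this, hgp]
  · intro m hm
    by_cases h1 : m + 1 < n
    · have h2 : m < n := by omega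
      simpa [h1, h2] using hfs m h2
    · by_cases h2 : m < n
      · have h3 : m + 1 = n := by omega
        have : g (m + 1 - n) = f (m + 1) := by rw [h3]; simp [hg0, ← hfn]
        simp only [if_pos h2, if_neg h1, this]; exact hfs m h2
      · have h3 : m - n < p := by omega
        have e1 : m + 1 - n = (m - n) + 1 := by omega
        simpa [h1, h2, e1] using hgs (m - n) h3
  · intro m hm
    by_cases h1 : m < n
    · simpa [h1] using hfO m (by omega)
    · simpa [h1] using hgO (m - n) (by omega)

lemma traj_to_path {d : ℕ} {L : Fin d → Finset ℤ} {O : Set (Pt d)} :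
    ∀ (n : ℕ) (cs : ℕ → Pt d), cs 0 ∉ O →
      (∀ m, m < n → Adjacent L O (cs m) (cs (m + 1))) →
      ∃ f, IsMazePath O f (∑ m ∈ Finset.range n, manh (cs m) (cs (m + 1))) (cs 0) (cs n) := by
  intro n
  induction n with
  | zero =>
    intro cs h0 _
    exact ⟨fun _ => cs 0, rfl, by simp, fun m hm => absurd hm (by simp), fun m hm => by
      simp at hm; simp [hm, h0]⟩
  | succ n ih =>
    intro cs h0 hadj
    obtain ⟨f, hf⟩ := ih cs h0 (fun m hm => hadj m (by omega))
    obtain ⟨g, hg⟩ := adjacent_mazePath (hadj n (by omega))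
    rw [Finset.sum_range_succ]
    exact mazePath_append hf hg

/-- any trajectory in the corner MDP from a corner `c` to the goal yields a
maze trajectory of the same total cost; consequently `V*_M(c) ≤ V*_{M'}(c)`. -/
theorem corner_trajectory_to_maze_trajectory {d k : ℕ} (a b : Fin k → Pt d) (g : Pt d)
    (c : Pt d) (hc : c ∈ Corners (Lists a b g)) (hcO : c ∉ OSet a b) :
    (∀ (n : ℕ) (cs : ℕ → Pt d), cs 0 = c → cs n = g →
      (∀ m, m < n → Adjacent (Lists a b g) (OSet a b) (cs m) (cs (m + 1))) →
      ∃ f : ℕ → Pt d,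
        IsMazePath (OSet a b) f (∑ m ∈ Finset.range n, manh (cs m) (cs (m + 1))) c g) ∧
    mazeDist (OSet a b) c g ≤ cornerDist (Lists a b g) (OSet a b) c g := by
  constructor
  · intro n cs h0 hn hadj
    obtain ⟨f, hf⟩ := traj_to_path n cs (by rw [h0]; exact hcO) hadj
    rw [h0, hn] at hf
    exact ⟨f, hf⟩
  · apply le_sInf
    rintro N ⟨n, cs, h0, hn, hadj, rfl⟩
    obtain ⟨f, hf⟩ := traj_to_path n cs (by rw [h0]; exact hcO) hadj
    rw [h0, hn] at hf
    have h1 : mazeDist (OSet a b) c g ≤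
        ((∑ m ∈ Finset.range n, manh (cs m) (cs (m + 1)) : ℕ) : ℕ∞) :=
      sInf_le ⟨_, rfl, f, hf⟩
    simpa [Nat.cast_sum] using h1


end Maze
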